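/- (Energy/flux dissipation identity.) Let f be a bounded weak solution of ω·∇_z f + σ L f = 0 on Z × S^d, smooth enough in z. Then for each x-Fourier mode k ∈ ℤ^d, the function y ↦ ⟨ω_y |f̂(k,y,·)|²⟩ is Lipschitz and satisfies ∂_y⟨ω_y|f̂(k,y,·)|²⟩ + 2σ Re⟨ \overline{f̂(k,y,·)} (L f̂)(k,y,·)⟩ = 0 for y > 0; in particular, by coercivity, ∂_y⟨ω_y|f̂|²⟩(k,y) + 2σμ⟨|f̂ − ⟨f̂⟩|²⟩(k,y) ≤ 0, so y ↦ ⟨ω_y|f̂|²⟩(k,y) is nonincreasing. -/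

import Mathlib

open MeasureTheory Metric Set
noncomputable section

/-- `E = ℝ^{d+1}`, ambient space of the sphere of directions `S^d`. -/
abbrev Esp (d : ℕ) := EuclideanSpace ℝ (Fin (d+1))

/-- Surface measure on the unit sphere `S^d ⊂ ℝ^{d+1}`. -/
noncomputable def sphμ (d : ℕ) : Measure (Esp d) := (μH[(d : ℝ)]).restrict (Metric.sphere 0 1)

/-- Vertical component `ω_y` of a direction `ω ∈ S^d`. -/
def wy (d : ℕ) (ω : Esp d) : ℝ := ω (Fin.last d)

/-- `|B^d|`: Lebesgue measure of the unit ball of `ℝ^d`. -/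
def Bvol (d : ℕ) : ℝ := (volume (Metric.ball (0 : EuclideanSpace ℝ (Fin d)) 1)).toReal

/-- `|S^d|`: total surface measure of the sphere. -/
noncomputable def Svol (d : ℕ) : ℝ := ((sphμ d) Set.univ).toReal

/-- Horizontal component `ω_x ∈ ℝ^d` of a direction `ω ∈ S^d`. -/
def wx (d : ℕ) (ω : Esp d) : Fin d → ℝ := fun i => ω i.castSucc



lemma radial_lip {E : Type*} [NormedAddCommGroup E] [NormedSpace ℝ E] :
    LipschitzOnWith 2 (fun z : E => ‖z‖⁻¹ • z) {z : E | 1 ≤ ‖z‖} := by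
  rw [lipschitzOnWith_iff_dist_le_mul]
  intro a ha b hb
  simp only [mem_setOf_eq] at ha hb
  have ha0 : (0:ℝ) < ‖a‖ := lt_of_lt_of_le one_pos ha
  have hb0 : (0:ℝ) < ‖b‖ := lt_of_lt_of_le one_pos hb
  rw [dist_eq_norm]
  have key : ‖a‖⁻¹ • a - ‖b‖⁻¹ • b = ‖a‖⁻¹ • (a - b) + (‖a‖⁻¹ - ‖b‖⁻¹) • b := by
    module
  rw [key]
  have h1 : ‖‖a‖⁻¹ • (a - b)‖ ≤ ‖a - b‖ := by
    rw [norm_smul, norm_inv, norm_norm]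
    calc ‖a‖⁻¹ * ‖a-b‖ ≤ 1 * ‖a-b‖ := by
          apply mul_le_mul_of_nonneg_right _ (norm_nonneg _)
          exact inv_le_one_of_one_le₀ ha
      _ = ‖a-b‖ := one_mul _
  have h2 : ‖(‖a‖⁻¹ - ‖b‖⁻¹) • b‖ ≤ ‖a - b‖ := by
    rw [norm_smul, Real.norm_eq_abs]
    have : |‖a‖⁻¹ - ‖b‖⁻¹| = |‖b‖ - ‖a‖| / (‖a‖ * ‖b‖) := by
      rw [inv_sub_inv ha0.ne' hb0.ne', abs_div, abs_of_pos (mul_pos ha0 hb0)]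
    rw [this]
    have hab : |‖b‖ - ‖a‖| ≤ ‖a - b‖ := by
      rw [abs_sub_comm]
      exact abs_norm_sub_norm_le a b
    calc |‖b‖ - ‖a‖| / (‖a‖ * ‖b‖) * ‖b‖ = |‖b‖ - ‖a‖| / ‖a‖ := by
          field_simp
      _ ≤ ‖a - b‖ / 1 := div_le_div₀ (norm_nonneg _) hab one_pos ha
      _ = ‖a-b‖ := div_one _
  calc ‖‖a‖⁻¹ • (a - b) + (‖a‖⁻¹ - ‖b‖⁻¹) • b‖ ≤ ‖‖a‖⁻¹ • (a - b)‖ + ‖(‖a‖⁻¹ - ‖b‖⁻¹) • b‖ := norm_add_le _ _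
    _ ≤ ‖a-b‖ + ‖a-b‖ := add_le_add h1 h2
    _ = 2 * dist a b := by rw [dist_eq_norm]; ring

lemma coord_le_norm {n : ℕ} (z : EuclideanSpace ℝ (Fin n)) (i : Fin n) : |z i| ≤ ‖z‖ := by
  rw [EuclideanSpace.norm_eq, ← Real.sqrt_sq_eq_abs (z i)]
  apply Real.sqrt_le_sqrt
  calc z i ^ 2 ≤ ∑ j, z j ^ 2 :=
        Finset.single_le_sum (f := fun j => z j ^ 2) (fun j _ => sq_nonneg _) (Finset.mem_univ i)
    _ = ∑ j, ‖z j‖ ^ 2 := by simp [Real.norm_eq_abs, sq_abs]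

noncomputable section

/-- insertion map as a map of `EuclideanSpace`s -/
def insE (d : ℕ) (i : Fin (d+1)) (s : ℝ) (x : EuclideanSpace ℝ (Fin d)) : Esp d :=
  (WithLp.equiv 2 _).symm (Fin.insertNth (α := fun _ => ℝ) i s ((WithLp.equiv 2 _) x))

lemma insE_apply (d : ℕ) (i : Fin (d+1)) (s : ℝ) (x : EuclideanSpace ℝ (Fin d)) (j : Fin (d+1)) :
    insE d i s x j = Fin.insertNth (α := fun _ => ℝ) i s ((WithLp.equiv 2 _) x) j := rfl

lemma ins_isometry (d : ℕ) (i : Fin (d+1)) (s : ℝ) : Isometry (insE d i s) := by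
  apply Isometry.of_dist_eq
  intro x y
  rw [EuclideanSpace.dist_eq (x := insE d i s x) (y := insE d i s y), EuclideanSpace.dist_eq]
  congr 1
  rw [Fin.sum_univ_succAbove (fun j => dist (insE d i s x j) (insE d i s y j) ^ 2) i]
  simp only [insE_apply, Fin.insertNth_apply_same, Fin.insertNth_apply_succAbove]
  simp [WithLp.equiv]

lemma norm_insE_ge (d : ℕ) (i : Fin (d+1)) (s : ℝ) (x : EuclideanSpace ℝ (Fin d)) :
    |s| ≤ ‖insE d i s x‖ := by
  have := coord_le_norm (insE d i s x) i
  rwa [insE_apply, Fin.insertNth_apply_same] at this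

lemma sphere_cover (d : ℕ) :
    Metric.sphere (0 : Esp d) 1 ⊆
      ⋃ i : Fin (d+1), ⋃ s ∈ ({-1, 1} : Set ℝ),
        (fun z : Esp d => ‖z‖⁻¹ • z) '' (insE d i s '' closedBall 0 (d+1)) := by
  intro ω hω
  have hn : ‖ω‖ = 1 := by simpa using hω
  obtain ⟨i, -, hi⟩ := Finset.exists_max_image Finset.univ (fun j => |ω j|) ⟨0, Finset.mem_univ 0⟩
  have hsum : ∑ j, ω j ^ 2 = 1 := by
    have h2 : Real.sqrt (∑ j, ‖ω j‖^2) = 1 := (EuclideanSpace.norm_eq ω) ▸ hn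
    have h4 : ∑ j, ‖ω j‖^2 = 1 := by
      nlinarith [Real.sq_sqrt (by positivity : (0:ℝ) ≤ ∑ j, ‖ω j‖^2)]
    simpa [Real.norm_eq_abs, sq_abs] using h4
  have hub : ∀ j, ω j ^ 2 ≤ ω i ^ 2 := by
    intro j
    have := hi j (Finset.mem_univ j)
    nlinarith [abs_nonneg (ω j), abs_nonneg (ω i), sq_abs (ω j), sq_abs (ω i)]
  have hbig : 1 ≤ ((d:ℝ)+1) * ω i ^ 2 := by
    calc (1:ℝ) = ∑ j, ω j ^ 2 := hsum.symm
      _ ≤ ∑ _j : Fin (d+1), ω i ^2 := Finset.sum_le_sum (fun j _ => hub j)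
      _ = ((d:ℝ)+1) * ω i ^2 := by simp [Finset.sum_const]
  have hipos : 0 < |ω i| := by
    rw [abs_pos]; intro h0; rw [h0] at hbig; simp at hbig; linarith
  have hile : |ω i| ≤ 1 := hn ▸ coord_le_norm ω i
  set c : ℝ := |ω i| with hc
  have hne : ω i ≠ 0 := fun h0 => by rw [hc, h0] at hipos; simp at hipos
  have hcinv : c⁻¹ ≤ (d:ℝ)+1 := by
    rw [inv_eq_one_div, div_le_iff₀ hipos]
    nlinarith [sq_abs (ω i),
      mul_nonneg (mul_nonneg (by positivity : (0:ℝ) ≤ (d:ℝ)+1) hipos.le) (sub_nonneg.mpr hile)]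
  set z : Esp d := c⁻¹ • ω with hz
  set s : ℝ := if 0 ≤ ω i then (1:ℝ) else -1 with hs
  have hzi : z i = s := by
    have hzz : z i = c⁻¹ * ω i := rfl
    rw [hzz, hc, hs]
    rcases le_or_gt 0 (ω i) with h|h
    · rw [abs_of_nonneg h, if_pos h, inv_mul_cancel₀ hne]
    · rw [abs_of_neg h, if_neg (not_le.mpr h)]
      field_simp
  have hnz : ‖z‖ = c⁻¹ := by
    rw [hz, norm_smul, hn, Real.norm_eq_abs, abs_of_nonneg (inv_nonneg.mpr (abs_nonneg _)), mul_one]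
  set x : EuclideanSpace ℝ (Fin d) :=
    (WithLp.equiv 2 _).symm (Fin.removeNth i ((WithLp.equiv 2 _) z)) with hx
  have hins : insE d i s x = z := by
    have : Fin.insertNth (α := fun _ => ℝ) i s (Fin.removeNth i ((WithLp.equiv 2 _) z))
        = (WithLp.equiv 2 _) z := by
      rw [← hzi]
      exact Fin.insertNth_self_removeNth i _
    simp only [insE, hx]
    rw [Equiv.apply_symm_apply, this]
    rfl
  have hxball : x ∈ closedBall (0 : EuclideanSpace ℝ (Fin d)) ((d:ℝ)+1) := by
    rw [mem_closedBall, dist_zero_right]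
    have hle : ‖x‖ ≤ ‖z‖ := by
      rw [EuclideanSpace.norm_eq, EuclideanSpace.norm_eq]
      apply Real.sqrt_le_sqrt
      rw [Fin.sum_univ_succAbove (fun j => ‖z j‖ ^ 2) i]
      have : ∀ j : Fin d, ‖x j‖^2 = ‖z (i.succAbove j)‖^2 := fun j => rfl
      simp only [this]
      exact le_add_of_nonneg_left (by positivity)
    rw [hnz] at hle
    linarith
  refine mem_iUnion.mpr ⟨i, mem_iUnion.mpr ⟨s, mem_iUnion.mpr ⟨?_, ?_⟩⟩⟩
  · rw [hs]; rcases le_or_gt 0 (ω i) with h|h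
    · simp [if_pos h]
    · simp [if_neg (not_le.mpr h)]
  · refine ⟨z, ⟨x, hxball, hins⟩, ?_⟩
    show ‖z‖⁻¹ • z = ω
    rw [hnz, hz, inv_inv, smul_smul]
    rw [mul_inv_cancel₀ (ne_of_gt hipos), one_smul]

lemma hsphere_fin (d : ℕ) : μH[(d:ℝ)] (Metric.sphere (0 : Esp d) 1) < ⊤ := by
  have hball : μH[(d:ℝ)] (closedBall (0 : EuclideanSpace ℝ (Fin d)) ((d:ℝ)+1)) < ⊤ := by
    have hfr : ((Module.finrank ℝ (EuclideanSpace ℝ (Fin d)) : ℕ) : ℝ) = (d : ℝ) := by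
      simp [finrank_euclideanSpace_fin]
    rw [← hfr]
    exact (isCompact_closedBall _ _).measure_lt_top
  have himg : ∀ (i : Fin (d+1)) (s : ℝ), s ∈ ({-1,1} : Set ℝ) →
      μH[(d:ℝ)] ((fun z : Esp d => ‖z‖⁻¹ • z) '' (insE d i s '' closedBall 0 ((d:ℝ)+1))) < ⊤ := by
    intro i s hs
    have habs : |s| = 1 := by rcases hs with h|h <;> simp_all
    have hsub : insE d i s '' closedBall 0 ((d:ℝ)+1) ⊆ {z : Esp d | 1 ≤ ‖z‖} := by
      rintro - ⟨x, -, rfl⟩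
      exact mem_setOf.mpr (habs ▸ norm_insE_ge d i s x)
    calc μH[(d:ℝ)] ((fun z : Esp d => ‖z‖⁻¹ • z) '' (insE d i s '' closedBall 0 ((d:ℝ)+1)))
        ≤ (2:NNReal) ^ (d:ℝ) * μH[(d:ℝ)] (insE d i s '' closedBall 0 ((d:ℝ)+1)) :=
          ((radial_lip).mono hsub).hausdorffMeasure_image_le (by positivity)
      _ = (2:NNReal) ^ (d:ℝ) * μH[(d:ℝ)] (closedBall (0:EuclideanSpace ℝ (Fin d)) ((d:ℝ)+1)) := by
          rw [(ins_isometry d i s).hausdorffMeasure_image (Or.inl (by positivity))]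
      _ < ⊤ := by
          apply ENNReal.mul_lt_top _ hball
          exact ENNReal.rpow_lt_top_of_nonneg (by positivity) (by simp)
  have hcov := sphere_cover d
  apply lt_of_le_of_lt (measure_mono hcov)
  apply lt_of_le_of_lt (measure_iUnion_le _)
  rw [tsum_fintype]
  apply ENNReal.sum_lt_top.mpr
  intro i _
  rw [Set.biUnion_pair]
  apply lt_of_le_of_lt (measure_union_le _ _)
  exact ENNReal.add_lt_top.mpr ⟨himg i (-1) (by simp), himg i 1 (by simp)⟩

/-- energy/flux dissipation identity for a single `x`-Fourier mode `k`:
if `g(y,·)` satisfies `ω_y ∂_y g + 2πi(k·ω_x) g + σ L g = 0`, then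
`y ↦ ⟨ω_y |g(y,·)|²⟩` is Lipschitz on `(0,∞)`, satisfies
`∂_y ⟨ω_y|g|²⟩ + 2σ Re⟨ḡ Lg⟩ = 0`, and (by the spectral gap `μ₀`)
`∂_y ⟨ω_y|g|²⟩ + 2σμ₀ ‖g − ⟨g⟩‖² ≤ 0`; in particular it is nonincreasing. -/
theorem stmt15 (d : ℕ) (p : Esp d → Esp d → ℝ)
    (hmeas : Measurable (Function.uncurry p))
    (hsymm : ∀ ω ω', p ω ω' = p ω' ω)
    (hpos : ∀ᵐ w ∂((sphμ d).prod (sphμ d)), 0 < p w.1 w.2)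
    (hnorm : ∀ᵐ ω ∂(sphμ d), ∫ ω', p ω ω' ∂(sphμ d) = 1)
    (sig : ℝ) (hsig : 0 < sig) (k : Fin d → ℤ)
    -- spectral gap (coercivity) of L with constant μ₀ > 0:
    (μ₀ : ℝ) (hμ₀ : 0 < μ₀)
    (hcoer : ∀ φ : Esp d → ℂ, MemLp φ 2 (sphμ d) →
      μ₀ * ∫ ω, ‖φ ω - (∫ ω', φ ω' ∂(sphμ d)) / (Svol d : ℂ)‖^2 ∂(sphμ d)
        ≤ (∫ ω, (starRingEnd ℂ) (φ ω)
              * (∫ ω', (p ω ω' : ℂ) * (φ ω - φ ω') ∂(sphμ d)) ∂(sphμ d)).re / Svol d)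
    (g g' : ℝ → Esp d → ℂ) (C : ℝ)
    (hgc : Continuous fun q : ℝ × Esp d => g q.1 q.2)
    (hg'c : Continuous fun q : ℝ × Esp d => g' q.1 q.2)
    (hb : ∀ y ω, ‖g y ω‖ ≤ C ∧ ‖g' y ω‖ ≤ C)
    -- the Fourier-mode equation `ω_y ∂_y g + 2πi (k·ω_x) g + σ L g = 0`:
    (hode : ∀ y, 0 < y → ∀ ω ∈ Metric.sphere (0 : Esp d) 1,
      HasDerivAt (fun s => g s ω) (g' y ω) y ∧
      (wy d ω : ℂ) * g' y ω
        + 2 * Real.pi * Complex.I * (∑ i, (k i : ℂ) * (wx d ω i : ℂ)) * g y ω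
        + sig * (∫ ω', (p ω ω' : ℂ) * (g y ω - g y ω') ∂(sphμ d)) = 0) :
    (∀ y, 0 < y → HasDerivAt
        (fun s => (Svol d)⁻¹ * ∫ ω, wy d ω * ‖g s ω‖^2 ∂(sphμ d))
        (-2 * sig * (Svol d)⁻¹
          * (∫ ω, (starRingEnd ℂ) (g y ω)
              * (∫ ω', (p ω ω' : ℂ) * (g y ω - g y ω') ∂(sphμ d)) ∂(sphμ d)).re) y) ∧
    (∀ y, 0 < y →
      -2 * sig * (Svol d)⁻¹
          * (∫ ω, (starRingEnd ℂ) (g y ω)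
              * (∫ ω', (p ω ω' : ℂ) * (g y ω - g y ω') ∂(sphμ d)) ∂(sphμ d)).re
        + 2 * sig * μ₀
          * ∫ ω, ‖g y ω - (∫ ω', g y ω' ∂(sphμ d)) / (Svol d : ℂ)‖^2 ∂(sphμ d) ≤ 0) ∧
    (∃ Λ : NNReal, LipschitzOnWith Λ
        (fun y => (Svol d)⁻¹ * ∫ ω, wy d ω * ‖g y ω‖^2 ∂(sphμ d)) (Set.Ioi 0)) ∧
    AntitoneOn (fun y => (Svol d)⁻¹ * ∫ ω, wy d ω * ‖g y ω‖^2 ∂(sphμ d)) (Set.Ioi 0) := by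
  classical
  -- finiteness of the sphere measure
  haveI hfin : IsFiniteMeasure (sphμ d) := by
    constructor
    rw [sphμ, Measure.restrict_apply_univ]
    exact hsphere_fin d
  set ν := sphμ d with hν
  have hC0 : 0 ≤ C := le_trans (norm_nonneg _) (hb 0 0).1
  have hgyc : ∀ y, Continuous (g y) := fun y => hgc.comp (Continuous.prodMk_right y)
  have hg'yc : ∀ y, Continuous (g' y) := fun y => hg'c.comp (Continuous.prodMk_right y)
  -- the scattering term
  set L : ℝ → Esp d → ℂ := fun y ω => ∫ ω', (p ω ω' : ℂ) * (g y ω - g y ω') ∂ν with hL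
  have hLsm : ∀ y, StronglyMeasurable (L y) := by
    intro y
    apply MeasureTheory.StronglyMeasurable.integral_prod_right (f := fun ω ω' => (p ω ω' : ℂ) * (g y ω - g y ω'))
    apply Measurable.stronglyMeasurable
    apply Measurable.mul
    · exact Complex.measurable_ofReal.comp hmeas
    · exact ((hgyc y).comp continuous_fst).measurable.sub ((hgyc y).comp continuous_snd).measurable
  -- a.e. properties of the kernel
  have hpω : ∀ᵐ ω ∂ν, (Integrable (fun ω' => p ω ω') ν) ∧ (∫ ω', p ω ω' ∂ν = 1)
      ∧ (∀ᵐ ω' ∂ν, 0 ≤ p ω ω') := by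
    filter_upwards [hnorm, Measure.ae_ae_of_ae_prod hpos] with ω h1 h2
    refine ⟨?_, h1, h2.mono fun ω' h => h.le⟩
    by_contra hni
    rw [integral_undef hni] at h1
    exact zero_ne_one h1
  have hLb : ∀ᵐ ω ∂ν, ∀ y, ‖L y ω‖ ≤ 2 * C := by
    filter_upwards [hpω] with ω hω y
    obtain ⟨hi, hone, hnn⟩ := hω
    calc ‖L y ω‖ ≤ ∫ ω', p ω ω' * (2 * C) ∂ν := by
          apply norm_integral_le_of_norm_le (hi.mul_const _)
          filter_upwards [hnn] with ω' hnn'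
          rw [norm_mul, Complex.norm_real, Real.norm_eq_abs, abs_of_nonneg hnn']
          apply mul_le_mul_of_nonneg_left _ hnn'
          calc ‖g y ω - g y ω'‖ ≤ ‖g y ω‖ + ‖g y ω'‖ := norm_sub_le _ _
            _ ≤ C + C := add_le_add (hb y ω).1 (hb y ω').1
            _ = 2 * C := by ring
      _ = 2 * C := by rw [integral_mul_const, hone, one_mul]
  -- integrability of conj g * L g
  have hint2 : ∀ y, Integrable (fun ω => (starRingEnd ℂ) (g y ω) * L y ω) ν := by
    intro y
    apply Integrable.mono' (integrable_const (C * (2 * C)))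
    · exact ((Complex.continuous_conj.comp (hgyc y)).aestronglyMeasurable.mul
        (hLsm y).aestronglyMeasurable)
    · filter_upwards [hLb] with ω h
      rw [norm_mul, RCLike.norm_conj]
      exact mul_le_mul (hb y ω).1 (h y) (norm_nonneg _) hC0
  -- a.e. membership of the sphere
  have hae_sph : ∀ᵐ ω ∂ν, ω ∈ Metric.sphere (0 : Esp d) 1 := by
    rw [hν, sphμ]
    exact ae_restrict_mem isClosed_sphere.measurableSet
  have hwy1 : ∀ ω ∈ Metric.sphere (0 : Esp d) 1, |wy d ω| ≤ 1 := by
    intro ω hω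
    have := coord_le_norm ω (Fin.last d)
    rwa [mem_sphere_zero_iff_norm.mp hω] at this
  -- pointwise key algebraic identity from the equation
  have hkey : ∀ y, 0 < y → ∀ ω ∈ Metric.sphere (0 : Esp d) 1,
      wy d ω * (2 * ((starRingEnd ℂ) (g y ω) * g' y ω).re)
        = -2 * sig * ((starRingEnd ℂ) (g y ω) * L y ω).re := by
    intro y hy ω hω
    have heq := (hode y hy ω hω).2
    set a : ℝ := ∑ i, (k i : ℝ) * wx d ω i with ha
    have hcast : (∑ i, (k i : ℂ) * (wx d ω i : ℂ)) = (a : ℂ) := by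
      rw [ha]; push_cast; ring
    have hsq : (starRingEnd ℂ) (g y ω) * g y ω = (Complex.normSq (g y ω) : ℂ) := by
      rw [mul_comm, Complex.mul_conj]
    rw [hcast] at heq
    have h2 : (wy d ω : ℂ) * ((starRingEnd ℂ) (g y ω) * g' y ω)
        = -(2 * (Real.pi : ℂ) * Complex.I * (a : ℂ) * (Complex.normSq (g y ω) : ℂ))
          - (sig : ℂ) * ((starRingEnd ℂ) (g y ω) * L y ω) := by
      linear_combination (starRingEnd ℂ) (g y ω) * heq
        - 2 * (Real.pi : ℂ) * Complex.I * (a : ℂ) * hsq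
    have h3 := congrArg Complex.re h2
    simp only [Complex.mul_re, Complex.mul_im, Complex.sub_re, Complex.neg_re,
      Complex.ofReal_re, Complex.ofReal_im, Complex.I_re, Complex.I_im,
      Complex.re_ofNat, Complex.im_ofNat] at h3 ⊢
    ring_nf at h3 ⊢
    linarith
  -- derivative of the squared norm
  have hsqder : ∀ (y : ℝ) (ω : Esp d), HasDerivAt (fun s => g s ω) (g' y ω) y →
      HasDerivAt (fun s => ‖g s ω‖ ^ 2) (2 * ((starRingEnd ℂ) (g y ω) * g' y ω).re) y := by
    intro y ω hd
    have hconj : HasDerivAt (fun s => (starRingEnd ℂ) (g s ω)) ((starRingEnd ℂ) (g' y ω)) y := by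
      have h := (Complex.conjCLE.toContinuousLinearMap.hasFDerivAt).comp_hasDerivAt y hd
      simpa [Function.comp_def] using h
    have hmul := hconj.mul hd
    have hre := (Complex.reCLM.hasFDerivAt (x := (starRingEnd ℂ) (g y ω) * g y ω)).comp_hasDerivAt y hmul
    have hfun : (fun s => ‖g s ω‖ ^ 2)
        = fun s => Complex.reCLM ((starRingEnd ℂ) (g s ω) * g s ω) := by
      funext s
      simp only [Complex.reCLM_apply]
      rw [mul_comm, Complex.mul_conj]
      simp [Complex.normSq_eq_norm_sq]
      norm_cast
    rw [hfun]
    refine hre.congr_deriv ?_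
    simp only [Complex.reCLM_apply, Complex.add_re, Complex.mul_re, Complex.conj_re,
      Complex.conj_im]
    ring
  have hDeq : ∀ y, 0 < y →
      (∫ ω, wy d ω * (2 * ((starRingEnd ℂ) (g y ω) * g' y ω).re) ∂ν)
        = -2 * sig * (∫ ω, (starRingEnd ℂ) (g y ω) * L y ω ∂ν).re := by
    intro y hy
    have hre := integral_re (hint2 y)
    simp only [RCLike.re_to_complex] at hre
    rw [← hre, ← integral_const_mul]
    apply integral_congr_ae
    filter_upwards [hae_sph] with ω hω
    exact hkey y hy ω hω
  -- the basic derivative computation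
  have hD : ∀ y, 0 < y → HasDerivAt (fun s => ∫ ω, wy d ω * ‖g s ω‖ ^ 2 ∂ν)
      (-2 * sig * (∫ ω, (starRingEnd ℂ) (g y ω) * L y ω ∂ν).re) y := by
    intro y hy
    have hcont : ∀ t : ℝ, Continuous fun ω => wy d ω * ‖g t ω‖ ^ 2 := by
      intro t
      exact ((EuclideanSpace.proj (Fin.last d)).continuous).mul
        (((hgyc t).norm).pow 2)
    have hres := hasDerivAt_integral_of_dominated_loc_of_deriv_le
      (F := fun t ω => wy d ω * ‖g t ω‖ ^ 2)
      (F' := fun t ω => wy d ω * (2 * ((starRingEnd ℂ) (g t ω) * g' t ω).re))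
      (bound := fun _ => 2 * C ^ 2) (μ := ν) (x₀ := y) (s := ball y y) (ball_mem_nhds y hy)
      (Filter.Eventually.of_forall fun t => (hcont t).aestronglyMeasurable)
      ?hint ?h'meas ?hbound (integrable_const _) ?hdiff
    · rw [← hDeq y hy]
      exact hres.2
    case hint =>
      apply Integrable.mono' (integrable_const (C ^ 2))
      · exact (hcont y).aestronglyMeasurable
      · filter_upwards [hae_sph] with ω hω
        rw [Real.norm_eq_abs, abs_mul]
        calc |wy d ω| * |‖g y ω‖ ^ 2| ≤ 1 * |‖g y ω‖ ^ 2| :=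
              mul_le_mul_of_nonneg_right (hwy1 ω hω) (abs_nonneg _)
          _ = ‖g y ω‖ ^ 2 := by rw [one_mul, abs_of_nonneg (by positivity)]
          _ ≤ C ^ 2 := by nlinarith [(hb y ω).1, norm_nonneg (g y ω)]
    case h'meas =>
      apply Continuous.aestronglyMeasurable
      apply ((EuclideanSpace.proj (Fin.last d)).continuous).mul
      apply (continuous_const.mul _)
      exact (Complex.continuous_re.comp ((Complex.continuous_conj.comp (hgyc y)).mul (hg'yc y)))
    case hbound =>
      filter_upwards [hae_sph] with ω hω t ht
      rw [Real.norm_eq_abs, abs_mul]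
      have h1 : |2 * ((starRingEnd ℂ) (g t ω) * g' t ω).re| ≤ 2 * C ^ 2 := by
        rw [abs_mul, abs_two]
        have h2 : |((starRingEnd ℂ) (g t ω) * g' t ω).re| ≤ C ^ 2 := by
          calc |((starRingEnd ℂ) (g t ω) * g' t ω).re|
              ≤ ‖(starRingEnd ℂ) (g t ω) * g' t ω‖ := Complex.abs_re_le_norm _
            _ = ‖g t ω‖ * ‖g' t ω‖ := by rw [norm_mul, RCLike.norm_conj]
            _ ≤ C * C := mul_le_mul (hb t ω).1 (hb t ω).2 (norm_nonneg _) hC0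
            _ = C ^ 2 := (sq C).symm
        linarith
      calc |wy d ω| * |2 * ((starRingEnd ℂ) (g t ω) * g' t ω).re|
          ≤ 1 * (2 * C ^ 2) := mul_le_mul (hwy1 ω hω) h1 (abs_nonneg _) one_pos.le
        _ = 2 * C ^ 2 := one_mul _
    case hdiff =>
      filter_upwards [hae_sph] with ω hω t ht
      have htpos : 0 < t := by
        rw [Real.ball_eq_Ioo] at ht
        simpa using ht.1
      exact (hsqder t ω (hode t htpos ω hω).1).const_mul (wy d ω)
  set Φ : ℝ → ℝ := fun s => (Svol d)⁻¹ * ∫ ω, wy d ω * ‖g s ω‖ ^ 2 ∂ν with hΦ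
  set Φ' : ℝ → ℝ := fun s =>
    (Svol d)⁻¹ * (-2 * sig * (∫ ω, (starRingEnd ℂ) (g s ω) * L s ω ∂ν).re) with hΦ'
  have hDΦ : ∀ y, 0 < y → HasDerivAt Φ (Φ' y) y := fun y hy => (hD y hy).const_mul _
  have hS0 : 0 ≤ (Svol d)⁻¹ := inv_nonneg.mpr ENNReal.toReal_nonneg
  have hSS : (Svol d)⁻¹ * Svol d ≤ 1 := by
    rcases eq_or_ne (Svol d) 0 with h|h
    · rw [h]; simp
    · rw [inv_mul_cancel₀ h]
  have hSvol : Svol d = (ν Set.univ).toReal := rfl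
  -- the coercivity consequence
  have hmem : ∀ x : ℝ, MemLp (g x) 2 ν := fun x =>
    MemLp.of_bound (hgyc x).aestronglyMeasurable C
      (Filter.Eventually.of_forall fun ω => (hb x ω).1)
  have hN : ∀ x : ℝ, 0 ≤ ∫ ω, ‖g x ω - (∫ ω', g x ω' ∂ν) / (Svol d : ℂ)‖ ^ 2 ∂ν :=
    fun x => integral_nonneg (fun ω => by positivity)
  have hΦ'le : ∀ x : ℝ, Φ' x ≤ 0 := by
    intro x
    have hc := hcoer (g x) (hmem x)
    have h0 := le_trans (mul_nonneg hμ₀.le (hN x)) hc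
    simp only [div_eq_mul_inv] at h0
    have h1 := mul_nonneg hsig.le h0
    simp only [hΦ', hL]
    nlinarith [h1]
  -- bound on the derivative
  have hRb : ∀ s : ℝ, |(∫ ω, (starRingEnd ℂ) (g s ω) * L s ω ∂ν).re| ≤ 2 * C ^ 2 * Svol d := by
    intro s
    calc |(∫ ω, (starRingEnd ℂ) (g s ω) * L s ω ∂ν).re|
        ≤ ‖∫ ω, (starRingEnd ℂ) (g s ω) * L s ω ∂ν‖ := Complex.abs_re_le_norm _
      _ ≤ ∫ _ω, 2 * C ^ 2 ∂ν := by
          apply norm_integral_le_of_norm_le (integrable_const _)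
          filter_upwards [hLb] with ω h
          rw [norm_mul, RCLike.norm_conj]
          calc ‖g s ω‖ * ‖L s ω‖ ≤ C * (2 * C) :=
                mul_le_mul (hb s ω).1 (h s) (norm_nonneg _) hC0
            _ = 2 * C ^ 2 := by ring
      _ = 2 * C ^ 2 * Svol d := by rw [integral_const, hSvol, smul_eq_mul, measureReal_def]; ring
  have hΦ'b : ∀ s : ℝ, |Φ' s| ≤ 4 * sig * C ^ 2 := by
    intro s
    set R := (∫ ω, (starRingEnd ℂ) (g s ω) * L s ω ∂ν).re with hR
    have h1 : |Φ' s| = (Svol d)⁻¹ * (2 * sig * |R|) := by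
      simp only [hΦ']
      rw [← hR, abs_mul, abs_of_nonneg hS0, abs_mul, abs_mul, abs_neg, abs_two,
        abs_of_pos hsig]
    rw [h1]
    calc (Svol d)⁻¹ * (2 * sig * |R|) ≤ (Svol d)⁻¹ * (2 * sig * (2 * C ^ 2 * Svol d)) := by
          apply mul_le_mul_of_nonneg_left _ hS0
          exact mul_le_mul_of_nonneg_left (hRb s) (by positivity)
      _ = (4 * sig * C ^ 2) * ((Svol d)⁻¹ * Svol d) := by ring
      _ ≤ (4 * sig * C ^ 2) * 1 := mul_le_mul_of_nonneg_left hSS (by positivity)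
      _ = 4 * sig * C ^ 2 := mul_one _
  refine ⟨?_, ?_, ?_, ?_⟩
  · intro y hy
    have h := hDΦ y hy
    rw [hΦ'] at h
    simp only [hL] at h
    convert h using 1
    ring
  · intro y hy
    have hc := hcoer (g y) (hmem y)
    simp only [div_eq_mul_inv] at hc ⊢
    have hc2 := mul_le_mul_of_nonneg_left hc (by positivity : (0:ℝ) ≤ 2 * sig)
    nlinarith [hc2]
  · refine ⟨Real.toNNReal (4 * sig * C ^ 2), ?_⟩
    apply (convex_Ioi (0:ℝ)).lipschitzOnWith_of_nnnorm_hasDerivWithin_le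
      (f' := Φ') (fun x hx => (hDΦ x (mem_Ioi.mp hx)).hasDerivWithinAt)
    intro x hx
    rw [← NNReal.coe_le_coe, coe_nnnorm, Real.coe_toNNReal _ (by positivity), Real.norm_eq_abs]
    exact hΦ'b x
  · apply antitoneOn_of_deriv_nonpos (convex_Ioi (0:ℝ))
    · intro x hx
      exact (hDΦ x (mem_Ioi.mp hx)).continuousAt.continuousWithinAt
    · rw [interior_Ioi]
      intro x hx
      exact (hDΦ x (mem_Ioi.mp hx)).differentiableAt.differentiableWithinAt
    · rw [interior_Ioi]
      intro x hx
      rw [(hDΦ x (mem_Ioi.mp hx)).deriv]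
      exact hΦ'le x
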